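/- Assume X⁺ is a Hilbert space whose scalar product satisfies ⟨u,u⟩ = ‖u‖² for all u ∈ X⁺, and assume (B3). If u ∈ X∖X̃ is a critical point of the restriction of J to X(u), i.e. J'(u)[z] = 0 for all z ∈ X(u), then u is the unique global maximum of J on X(u): J(tu + v) < J(u) for every t ≥ 0 and v ∈ X̃ with tu + v ≠ u. -/

import Mathlib

open Filter Topology

/-- If `X⁺` is a Hilbert space whose scalar product generates the norm and
(B3) holds, then any critical point `u ∈ X∖X̃` of `J|_{X(u)}` is the unique global maximum
of `J` on `X̂(u)`: `J(tu + v) < J(u)` for all `t ≥ 0`, `v ∈ X̃` with `tu + v ≠ u`. -/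
theorem critical_point_unique_max
    {X : Type*} [NormedAddCommGroup X] [NormedSpace ℝ X] [CompleteSpace X]
    -- X is reflexive
    (hrefl : Function.Surjective (NormedSpace.inclusionInDoubleDual ℝ X))
    -- topological direct sum decomposition X = X⁺ ⊕ X̃, with projection P onto X⁺ along X̃
    (Xp Xt : Submodule ℝ X)
    (hXpcl : IsClosed (Xp : Set X)) (hXtcl : IsClosed (Xt : Set X))
    (P : X →L[ℝ] X)
    (hPm : ∀ x : X, P x ∈ Xp) (hQm : ∀ x : X, x - P x ∈ Xt)
    (hPp : ∀ x ∈ Xp, P x = x) (hPt : ∀ x ∈ Xt, P x = 0)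
    -- ‖u‖² = ‖u⁺‖² + ‖ũ‖²
    (hnorm : ∀ x : X, ‖x‖ ^ 2 = ‖P x‖ ^ 2 + ‖x - P x‖ ^ 2)
    -- J, I of class C¹ with J(u) = ½‖u⁺‖² - I(u)
    (J I : X → ℝ) (J' I' : X → X →L[ℝ] ℝ)
    (hJd : ∀ x, HasFDerivAt J (J' x) x) (hJ'c : Continuous J')
    (hId : ∀ x, HasFDerivAt I (I' x) x) (hI'c : Continuous I')
    (hJI : ∀ x : X, J x = (1 / 2) * ‖P x‖ ^ 2 - I x)
    -- X⁺ is a Hilbert space with ⟨u,u⟩ = ‖u‖² (parallelogram law on X⁺)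
    (hpar : ∀ u ∈ Xp, ∀ v ∈ Xp, ‖u + v‖ ^ 2 + ‖u - v‖ ^ 2 = 2 * ‖u‖ ^ 2 + 2 * ‖v‖ ^ 2)
    -- (B3)
    (hB3 : ∀ (u : X) (t : ℝ) (v : X), 0 ≤ t → v ∈ Xt → t • u + v ≠ u →
      ((t ^ 2 - 1) / 2) * I' u u + t * I' u v + I u - I (t • u + v) < 0)
    -- u ∈ X∖X̃ is a critical point of J restricted to X(u)
    (u : X) (hu : u ∉ Xt)
    (hcrit : ∀ z : X, (∃ t : ℝ, ∃ v ∈ Xt, z = t • u + v) → J' u z = 0) :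
    ∀ (t : ℝ), 0 ≤ t → ∀ v ∈ Xt, t • u + v ≠ u → J (t • u + v) < J u := by
  intro t ht v hv hne
  -- N x := J x + I x = ½ ‖P x‖²
  have hN : ∀ x : X, J x + I x = (1 / 2) * ‖P x‖ ^ 2 := by
    intro x; rw [hJI x]; ring
  -- critical point facts
  have hJu : J' u u = 0 := hcrit u ⟨1, 0, Xt.zero_mem, by simp⟩
  have hJv : J' u v = 0 := hcrit v ⟨0, v, hv, by simp⟩
  -- directional derivative in direction v: constant
  have hPv : P v = 0 := hPt v hv
  have hline : ∀ w : X, HasDerivAt (fun s : ℝ => J (u + s • w) + I (u + s • w))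
      (J' u w + I' u w) 0 := by
    intro w
    have hcurve : HasDerivAt (fun s : ℝ => u + s • w) w 0 := by
      simpa using ((hasDerivAt_id (0:ℝ)).smul_const w).const_add u
    have h1 : HasDerivAt (fun s : ℝ => J (u + s • w)) (J' u w) 0 := by
      have := (show HasFDerivAt J (J' u) (u + (0:ℝ) • w) by simpa using hJd u).comp_hasDerivAt 0 hcurve
      exact this
    have h2 : HasDerivAt (fun s : ℝ => I (u + s • w)) (I' u w) 0 := by
      have := (show HasFDerivAt I (I' u) (u + (0:ℝ) • w) by simpa using hId u).comp_hasDerivAt 0 hcurve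
      exact this
    exact h1.add h2
  -- I' u v = 0
  have hIv : I' u v = 0 := by
    have hconst : (fun s : ℝ => J (u + s • v) + I (u + s • v)) =
        fun _ : ℝ => (1 / 2) * ‖P u‖ ^ 2 := by
      funext s
      rw [hN]
      congr 2
      rw [map_add, map_smul, hPv, smul_zero, add_zero]
    have h0 : HasDerivAt (fun s : ℝ => J (u + s • v) + I (u + s • v)) 0 0 := by
      rw [hconst]; exact hasDerivAt_const 0 _
    have := (hline v).unique h0
    linarith [hJv, this]
  -- I' u u = ‖P u‖²
  have hIu : I' u u = ‖P u‖ ^ 2 := by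
    have hfun : (fun s : ℝ => J (u + s • u) + I (u + s • u)) =
        fun s : ℝ => (1 / 2) * (1 + s) ^ 2 * ‖P u‖ ^ 2 := by
      funext s
      rw [hN]
      have : P (u + s • u) = (1 + s) • P u := by
        rw [map_add, map_smul]; module
      rw [this, norm_smul]
      have : |1 + s| ^ 2 = (1 + s) ^ 2 := sq_abs _
      simp only [Real.norm_eq_abs]
      rw [mul_pow, this]; ring
    have h0 : HasDerivAt (fun s : ℝ => J (u + s • u) + I (u + s • u)) (‖P u‖ ^ 2) 0 := by
      rw [hfun]
      have h1 : HasDerivAt (fun s : ℝ => (1 / 2) * (1 + s) ^ 2 * ‖P u‖ ^ 2)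
          ((1 / 2) * (2 * (1 + 0)) * ‖P u‖ ^ 2) 0 := by
        have hb : HasDerivAt (fun s : ℝ => (1 + s) ^ 2) (2 * (1 + 0)) 0 := by
          have : HasDerivAt (fun s : ℝ => 1 + s) 1 0 := by
            simpa using (hasDerivAt_id (0:ℝ)).const_add 1
          have h2 := this.pow 2
          simp at h2 ⊢
          exact h2
        simpa [mul_assoc] using (hb.const_mul (1/2 : ℝ)).mul_const (‖P u‖ ^ 2)
      simpa using h1
    have := (hline u).unique h0
    linarith [hJu, this]
  -- conclude
  have hB := hB3 u t v ht hv hne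
  rw [hIu, hIv] at hB
  have hPt' : P (t • u + v) = t • P u := by
    rw [map_add, map_smul, hPv, add_zero]
  have hJtv : J (t • u + v) = (1 / 2) * (t ^ 2 * ‖P u‖ ^ 2) - I (t • u + v) := by
    rw [hJI, hPt', norm_smul, Real.norm_eq_abs, mul_pow, sq_abs]
  rw [hJtv, hJI u]
  nlinarith [hB]
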